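/- Let X and Y be jointly distributed random variables on finite sets 𝒳 and 𝒴, and let ν ∈ ℝ, ε_1 ≥ 0, t ∈ ℕ satisfy Pr_{(x,y)←(X,Y)}[ Pr[X=x|Y=y] < 2^{−ν} ] ≤ ε_1. Let h : 𝒳 × 𝒮 → {0,1}^t be a universal hash family and let S be uniform on 𝒮 and independent of (X,Y). For each y define ℛ(y) = { x ∈ 𝒳 : Pr[X=x|Y=y] ≥ 2^{−ν} }. Then the probability of the failure event — that X ∉ ℛ(Y), or that there exists x̂ ∈ ℛ(Y) with x̂ ≠ X and h(x̂, S) = h(X, S) — is at most ε_1 + 2^{ν−t}. -/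

import Mathlib

open Finset Real
open scoped Classical

/-- Reliability of the OW-SKA protocol: the probability (over the joint
pmf `p` of `(X,Y)` and an independent uniform seed `S`) that `X ∉ ℛ(Y)` or that some
`xhat ∈ ℛ(Y)`, `xhat ≠ X`, collides with `X` under the universal hash `h`, is at most
`ε₁ + 2^{ν−t}`. -/
theorem owska_reliability
    {𝒳 𝒴 𝒮 : Type*} [Fintype 𝒳] [Fintype 𝒴] [Fintype 𝒮] [Nonempty 𝒮]
    (p : 𝒳 → 𝒴 → ℝ) (hp : ∀ x y, 0 ≤ p x y) (hsum : ∑ x, ∑ y, p x y = 1)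
    (ν : ℝ) (ε₁ : ℝ) (hε₁ : 0 ≤ ε₁) (t : ℕ)
    (hbad : ∑ x, ∑ y,
        (if p x y / (∑ x', p x' y) < (2:ℝ) ^ (-ν) then p x y else 0) ≤ ε₁)
    (h : 𝒳 → 𝒮 → (Fin t → Bool))
    (huniv : ∀ x₁ x₂ : 𝒳, x₁ ≠ x₂ →
      ((univ.filter (fun s => h x₁ s = h x₂ s)).card : ℝ) / Fintype.card 𝒮
        ≤ ((2:ℝ) ^ t)⁻¹) :
    ∑ x, ∑ y, ∑ s, p x y * (Fintype.card 𝒮 : ℝ)⁻¹ *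
        (if (p x y / (∑ x', p x' y) < (2:ℝ) ^ (-ν) ∨
             ∃ xhat : 𝒳, (2:ℝ) ^ (-ν) ≤ p xhat y / (∑ x', p x' y) ∧
               xhat ≠ x ∧ h xhat s = h x s)
          then (1:ℝ) else 0)
      ≤ ε₁ + (2:ℝ) ^ (ν - (t:ℝ)) := by
  classical
  have hcard : (0:ℝ) < (Fintype.card 𝒮 : ℝ) := by
    exact_mod_cast Fintype.card_pos
  set c : ℝ := (Fintype.card 𝒮 : ℝ)⁻¹ with hc
  have hc0 : 0 ≤ c := by positivity
  have hcc : (Fintype.card 𝒮 : ℝ) * c = 1 := mul_inv_cancel₀ (ne_of_gt hcard)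
  have hpow : (0:ℝ) < (2:ℝ) ^ (-ν) := Real.rpow_pos_of_pos (by norm_num) _
  set A : 𝒳 → 𝒴 → Prop := fun x y => p x y / (∑ x', p x' y) < (2:ℝ) ^ (-ν) with hA
  set B : 𝒳 → 𝒴 → 𝒮 → Prop := fun x y s =>
    ∃ xhat : 𝒳, (2:ℝ) ^ (-ν) ≤ p xhat y / (∑ x', p x' y) ∧
      xhat ≠ x ∧ h xhat s = h x s with hB
  -- inner collision bound
  have inner : ∀ x y, ∑ s, c * (if B x y s then (1:ℝ) else 0) ≤ (2:ℝ) ^ (ν - (t:ℝ)) := by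
    intro x y
    set R : Finset 𝒳 := univ.filter (fun xhat => (2:ℝ) ^ (-ν) ≤ p xhat y / (∑ x', p x' y))
      with hR
    have hcardR : (R.card : ℝ) ≤ (2:ℝ) ^ ν := by
      have hSnn : (0:ℝ) ≤ ∑ x', p x' y := Finset.sum_nonneg fun x' _ => hp x' y
      rcases eq_or_lt_of_le hSnn with hSy | hSpos
      · have hRe : R = ∅ := by
          ext xhat
          simp only [hR, Finset.mem_filter, Finset.mem_univ, true_and, Finset.notMem_empty,
            iff_false, not_le, ← hSy, div_zero]
          exact hpow
        rw [hRe]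
        simp only [Finset.card_empty, Nat.cast_zero]
        positivity
      · have h1 : (R.card : ℝ) * ((2:ℝ) ^ (-ν) * (∑ x', p x' y)) ≤ ∑ xhat ∈ R, p xhat y := by
          have := Finset.card_nsmul_le_sum R (fun xhat => p xhat y)
            ((2:ℝ) ^ (-ν) * (∑ x', p x' y)) (by
              intro xhat hx
              rw [hR, Finset.mem_filter] at hx
              have := hx.2
              rw [le_div_iff₀ hSpos] at this
              linarith)
          simpa [nsmul_eq_mul] using this
        have h2 : ∑ xhat ∈ R, p xhat y ≤ ∑ x', p x' y :=
          Finset.sum_le_sum_of_subset_of_nonneg (Finset.subset_univ R)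
            (fun x' _ _ => hp x' y)
        have h3 : (R.card : ℝ) * (2:ℝ) ^ (-ν) ≤ 1 := by
          have := le_trans h1 h2
          rw [← mul_assoc] at this
          nlinarith
        rw [Real.rpow_neg (by norm_num)] at h3
        have h2pos : (0:ℝ) < (2:ℝ) ^ ν := Real.rpow_pos_of_pos (by norm_num) _
        calc (R.card : ℝ) = (R.card : ℝ) * ((2:ℝ)^ν)⁻¹ * (2:ℝ)^ν := by field_simp
          _ ≤ 1 * (2:ℝ)^ν := mul_le_mul_of_nonneg_right h3 (le_of_lt h2pos)
          _ = (2:ℝ)^ν := one_mul _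
    have hstep : ∀ s, (if B x y s then (1:ℝ) else 0)
        ≤ ∑ xhat ∈ R.erase x, (if h xhat s = h x s then (1:ℝ) else 0) := by
      intro s
      by_cases hb : B x y s
      · rw [if_pos hb]
        obtain ⟨x0, hx0, hne, hcol⟩ := hb
        have hmem : x0 ∈ R.erase x := by
          rw [Finset.mem_erase, hR, Finset.mem_filter]
          exact ⟨hne, Finset.mem_univ _, hx0⟩
        calc (1:ℝ) = (if h x0 s = h x s then (1:ℝ) else 0) := by rw [if_pos hcol]
          _ ≤ _ := Finset.single_le_sum (f := fun xhat => if h xhat s = h x s then (1:ℝ) else 0) (fun i _ => by split_ifs <;> norm_num) hmem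
      · rw [if_neg hb]
        exact Finset.sum_nonneg fun i _ => by split_ifs <;> norm_num
    calc ∑ s, c * (if B x y s then (1:ℝ) else 0)
        ≤ ∑ s, c * ∑ xhat ∈ R.erase x, (if h xhat s = h x s then (1:ℝ) else 0) :=
          Finset.sum_le_sum fun s _ => mul_le_mul_of_nonneg_left (hstep s) hc0
      _ = ∑ xhat ∈ R.erase x,
            ((univ.filter (fun s => h xhat s = h x s)).card : ℝ) / Fintype.card 𝒮 := by
          rw [← Finset.mul_sum, Finset.sum_comm]
          rw [Finset.mul_sum]
          congr 1
          ext xhat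
          rw [Finset.sum_boole]
          rw [hc, div_eq_mul_inv, mul_comm]
      _ ≤ ∑ xhat ∈ R.erase x, ((2:ℝ) ^ t)⁻¹ := by
          apply Finset.sum_le_sum
          intro xhat hx
          exact huniv xhat x (Finset.mem_erase.mp hx).1
      _ = ((R.erase x).card : ℝ) * ((2:ℝ) ^ t)⁻¹ := by
          rw [Finset.sum_const, nsmul_eq_mul]
      _ ≤ (2:ℝ) ^ ν * ((2:ℝ) ^ t)⁻¹ := by
          apply mul_le_mul_of_nonneg_right _ (by positivity)
          exact le_trans (by exact_mod_cast Finset.card_le_card (Finset.erase_subset _ _)) hcardR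
      _ = (2:ℝ) ^ (ν - (t:ℝ)) := by
          rw [Real.rpow_sub (by norm_num), ← Real.rpow_natCast (2:ℝ) t, div_eq_mul_inv]
  -- split into two sums
  have split : ∑ x : 𝒳, ∑ y : 𝒴, ∑ s : 𝒮, p x y * c * (if A x y ∨ B x y s then (1:ℝ) else 0)
      ≤ (∑ x : 𝒳, ∑ y : 𝒴, ∑ s : 𝒮, p x y * c * (if A x y then (1:ℝ) else 0))
        + ∑ x : 𝒳, ∑ y : 𝒴, ∑ s : 𝒮, p x y * c * (if B x y s then (1:ℝ) else 0) := by
    rw [← Finset.sum_add_distrib]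
    apply Finset.sum_le_sum
    intro x _
    rw [← Finset.sum_add_distrib]
    apply Finset.sum_le_sum
    intro y _
    rw [← Finset.sum_add_distrib]
    apply Finset.sum_le_sum
    intro s _
    have hpc : 0 ≤ p x y * c := mul_nonneg (hp x y) hc0
    by_cases ha : A x y <;> by_cases hb : B x y s <;>
      simp [ha, hb] <;> nlinarith
  have T1 : ∑ x : 𝒳, ∑ y : 𝒴, ∑ s : 𝒮, p x y * c * (if A x y then (1:ℝ) else 0) ≤ ε₁ := by
    calc ∑ x : 𝒳, ∑ y : 𝒴, ∑ s : 𝒮, p x y * c * (if A x y then (1:ℝ) else 0)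
        = ∑ x : 𝒳, ∑ y : 𝒴, (if A x y then p x y else 0) := by
          apply Finset.sum_congr rfl; intro x _
          apply Finset.sum_congr rfl; intro y _
          rw [Finset.sum_const, nsmul_eq_mul]
          by_cases ha : A x y <;> simp [ha] <;> ring_nf <;>
            field_simp <;> linear_combination (p x y) * hcc
      _ ≤ ε₁ := hbad
  have T2 : ∑ x : 𝒳, ∑ y : 𝒴, ∑ s : 𝒮, p x y * c * (if B x y s then (1:ℝ) else 0)
      ≤ (2:ℝ) ^ (ν - (t:ℝ)) := by
    calc ∑ x : 𝒳, ∑ y : 𝒴, ∑ s : 𝒮, p x y * c * (if B x y s then (1:ℝ) else 0)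
        = ∑ x, ∑ y, p x y * ∑ s, c * (if B x y s then (1:ℝ) else 0) := by
          apply Finset.sum_congr rfl; intro x _
          apply Finset.sum_congr rfl; intro y _
          rw [Finset.mul_sum]
          apply Finset.sum_congr rfl; intro s _
          ring
      _ ≤ ∑ x, ∑ y, p x y * (2:ℝ) ^ (ν - (t:ℝ)) := by
          apply Finset.sum_le_sum; intro x _
          apply Finset.sum_le_sum; intro y _
          exact mul_le_mul_of_nonneg_left (inner x y) (hp x y)
      _ = (∑ x, ∑ y, p x y) * (2:ℝ) ^ (ν - (t:ℝ)) := by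
          rw [Finset.sum_mul]
          apply Finset.sum_congr rfl; intro x _
          rw [Finset.sum_mul]
      _ = (2:ℝ) ^ (ν - (t:ℝ)) := by rw [hsum, one_mul]
  exact le_trans split (add_le_add T1 T2)
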